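/- Let S = {x, −x²} ⊂ ℚ[x], so K_S = {0}. Then the polynomial −x does not belong to the preordering T_S of ℚ[x] generated by S (finite sums ∑_{e∈{0,1}²} σ_e x^{e₁}(−x²)^{e₂} with σ_e ∈ ∑ ℚ_{≥0} ℚ[x]²), even though −x ≥ 0 on K_S. -/

import Mathlib

open Polynomial

/-- `σ` is a finite sum of terms `t·g²` with `t ∈ ℚ`, `t ≥ 0`, `g ∈ ℚ[x]`. -/
def SumWtSqQ (σ : ℚ[X]) : Prop :=
  ∃ (n : ℕ) (t : Fin n → ℚ) (g : Fin n → ℚ[X]),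
    (∀ i, 0 ≤ t i) ∧ σ = ∑ i, C (t i) * g i ^ 2

lemma sumwt_eval0_nonneg {σ : ℚ[X]} (h : SumWtSqQ σ) : 0 ≤ σ.eval 0 := by
  obtain ⟨n, t, g, ht, rfl⟩ := h
  simp only [eval_finset_sum, eval_mul, eval_C, eval_pow]
  exact Finset.sum_nonneg fun i _ => mul_nonneg (ht i) (sq_nonneg _)

lemma sumwt_coeff1 {σ : ℚ[X]} (h : SumWtSqQ σ) (h0 : σ.eval 0 = 0) : σ.coeff 1 = 0 := by
  obtain ⟨n, t, g, ht, rfl⟩ := h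
  simp only [eval_finset_sum, eval_mul, eval_C, eval_pow] at h0
  have hz : ∀ i ∈ Finset.univ, t i * (g i).eval 0 ^ 2 = 0 :=
    (Finset.sum_eq_zero_iff_of_nonneg
      (fun i _ => mul_nonneg (ht i) (sq_nonneg _))).mp h0
  have hz' : ∀ i : Fin n, t i * (g i).eval 0 = 0 := by
    intro i
    rcases mul_eq_zero.mp (hz i (Finset.mem_univ i)) with h | h
    · simp [h]
    · simp [pow_eq_zero_iff (two_ne_zero)] at h
      simp [h]
  rw [finset_sum_coeff]
  refine Finset.sum_eq_zero fun i _ => ?_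
  have : (C (t i) * g i ^ 2).coeff 1 = t i * (g i ^ 2).coeff 1 := coeff_C_mul _
  have hmul : (g i * g i).coeff 1
      = (g i).coeff 0 * (g i).coeff 1 + (g i).coeff 1 * (g i).coeff 0 := by
    rw [coeff_mul, show (Finset.HasAntidiagonal.antidiagonal 1 : Finset (ℕ × ℕ)) = {(0,1),(1,0)} from rfl]
    simp
  have he : (g i).coeff 0 = (g i).eval 0 := coeff_zero_eq_eval_zero _
  rw [this, sq, hmul, he]
  linear_combination (2 * (g i).coeff 1) * hz' i

theorem stmt14 :
    (∀ x : ℝ, (0 ≤ Polynomial.aeval x (X : ℚ[X]) ∧ 0 ≤ Polynomial.aeval x (-X ^ 2 : ℚ[X])) →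
      0 ≤ Polynomial.aeval x (-X : ℚ[X])) ∧
    ¬ ∃ σ₀ σ₁ σ₂ σ₃ : ℚ[X], SumWtSqQ σ₀ ∧ SumWtSqQ σ₁ ∧ SumWtSqQ σ₂ ∧ SumWtSqQ σ₃ ∧
      (-X : ℚ[X]) = σ₀ + σ₁ * X + σ₂ * (-X ^ 2) + σ₃ * (X * (-X ^ 2)) := by
  constructor
  · intro x ⟨hx, hx2⟩
    simp only [map_neg, map_pow, aeval_X] at *
    nlinarith
  · rintro ⟨σ₀, σ₁, σ₂, σ₃, h₀, h₁, h₂, h₃, heq⟩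
    have heq2 : (-X : ℚ[X]) = σ₀ + σ₁ * X - σ₂ * X ^ 2 - σ₃ * X ^ 3 := by
      linear_combination heq
    have hev0 : σ₀.eval 0 = 0 := by
      have := congrArg (eval 0) heq2
      simpa using this.symm
    have hc1 : (-X : ℚ[X]).coeff 1 = σ₀.coeff 1 + σ₁.coeff 0
        - (σ₂ * X ^ 2).coeff 1 - (σ₃ * X ^ 3).coeff 1 := by
      rw [heq2]
      simp [coeff_mul_X]
    rw [sumwt_coeff1 h₀ hev0] at hc1
    rw [coeff_mul_X_pow', coeff_mul_X_pow'] at hc1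
    simp only [coeff_neg, coeff_X_one] at hc1
    norm_num at hc1
    have h10 : σ₁.coeff 0 = σ₁.eval 0 := coeff_zero_eq_eval_zero _
    have := sumwt_eval0_nonneg h₁
    rw [h10] at hc1
    linarith
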